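/- Let X_t and X_{t'} be jointly distributed finite random vectors with n components each. Assume: (non-negativity) Un^(k)(V;Y|X) ≥ 0; (source data-processing inequality) Un^(k)(W;Y|X) ≤ Un^(k)(Z;Y|X) whenever W−Z−(X,Y) is a Markov chain; (self-unique identity) Un^(k)(X;Z|X) = Syn^(k)(X;Z) for any target Z; and that the downward-causation index 𝒟^(k) satisfies Σ_{α⊆[n],|α|=k} Syn^(k)(X_t;X_{t'}^α) ≥ 𝒟^(k)(X_t;X_{t'}) ≥ Syn^(k)(X_t;X_{t'}^β) for every β ⊆ [n] with |β| = k. Then the system admits supervenient features that exert downward causation of order k if and only if 𝒟^(k)(X_t;X_{t'}) > 0. -/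
import Mathlib


/-!
Framework: finite probability.  A finite sample space `Ω` carries a probability
mass function `μ : Ω → ℝ`; random variables are functions on `Ω`.
-/

noncomputable section

open scoped BigOperators

attribute [local instance] Classical.propDecidable

variable {Ω : Type} [Fintype Ω]

/-- The probability that the random variable `f` takes the value `a`, under the pmf `μ`. -/
def prEq (μ : Ω → ℝ) {A : Type} (f : Ω → A) (a : A) : ℝ :=
  ∑ ω, if f ω = a then μ ω else 0

/-- `μ` is a probability mass function on the finite sample space `Ω`. -/
def IsPMF (μ : Ω → ℝ) : Prop :=
  (∀ ω, 0 ≤ μ ω) ∧ ∑ ω, μ ω = 1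

/-- The Markov chain `f − g − h`: `f` and `h` are conditionally independent given `g`. -/
def MarkovChain (μ : Ω → ℝ) {A B C : Type} (f : Ω → A) (g : Ω → B) (h : Ω → C) : Prop :=
  ∀ a b c,
    prEq μ (fun ω => (f ω, g ω, h ω)) (a, b, c) * prEq μ g b =
      prEq μ (fun ω => (f ω, g ω)) (a, b) * prEq μ (fun ω => (g ω, h ω)) (b, c)

/-- Statistical independence of two random variables. -/
def IndepRV (μ : Ω → ℝ) {A B : Type} (f : Ω → A) (g : Ω → B) : Prop :=
  ∀ a b, prEq μ (fun ω => (f ω, g ω)) (a, b) = prEq μ f a * prEq μ g b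

/-- Shannon mutual information `I(f;g)`. -/
def mutInfo (μ : Ω → ℝ) {A B : Type} (f : Ω → A) (g : Ω → B) : ℝ :=
  ∑ a ∈ Finset.univ.image f, ∑ b ∈ Finset.univ.image g,
    prEq μ (fun ω => (f ω, g ω)) (a, b) *
      Real.log (prEq μ (fun ω => (f ω, g ω)) (a, b) / (prEq μ f a * prEq μ g b))

/-- Conditional mutual information `I(f;g|h)`. -/
def condMutInfo (μ : Ω → ℝ) {A B C : Type} (f : Ω → A) (g : Ω → B) (h : Ω → C) : ℝ :=
  ∑ a ∈ Finset.univ.image f, ∑ b ∈ Finset.univ.image g, ∑ c ∈ Finset.univ.image h,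
    prEq μ (fun ω => (f ω, g ω, h ω)) (a, b, c) *
      Real.log ((prEq μ h c * prEq μ (fun ω => (f ω, g ω, h ω)) (a, b, c)) /
        (prEq μ (fun ω => (f ω, h ω)) (a, c) * prEq μ (fun ω => (g ω, h ω)) (b, c)))

/-- Conditional entropy `H(f|g)`. -/
def condEntropyRV (μ : Ω → ℝ) {A B : Type} (f : Ω → A) (g : Ω → B) : ℝ :=
  -∑ a ∈ Finset.univ.image f, ∑ b ∈ Finset.univ.image g,
    prEq μ (fun ω => (f ω, g ω)) (a, b) *
      Real.log (prEq μ (fun ω => (f ω, g ω)) (a, b) / prEq μ g b)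

/-- The sub-vector `X^α` of the random vector `X`, for a set of indices `α ⊆ [n]`. -/
def subvec {n : ℕ} {𝓧 : Fin n → Type} (X : Ω → ∀ i, 𝓧 i) (α : Finset (Fin n)) :
    Ω → ∀ i : α, 𝓧 i :=
  fun ω i => X ω i

/-- The collection of all subsets of `[n]` of cardinality `k`. -/
def kSets (n k : ℕ) : Finset (Finset (Fin n)) :=
  Finset.univ.filter fun α => α.card = k

/-!
STATEMENT 2.  The system admits supervenient features that exert downward causation of
order `k` iff `𝒟⁽ᵏ⁾(X_t;X_{t'}) > 0`.

Abstract PID quantities:  `Un V f T t = Un⁽ᵏ⁾(f ; t | X_t)` (feature `f`, target `t`,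
sources `X_t`),  `Syn T t = Syn⁽ᵏ⁾(X_t ; t)`, and `D = 𝒟⁽ᵏ⁾(X_t;X_{t'})`.
Assumed: non-negativity, the source data-processing inequality, the self-unique identity
for any target, and the bounds
`Σ_{|α|=k} Syn⁽ᵏ⁾(X_t;X_{t'}^α) ≥ 𝒟⁽ᵏ⁾(X_t;X_{t'}) ≥ Syn⁽ᵏ⁾(X_t;X_{t'}^β)` for `|β| = k`.

A supervenient feature `f` exerts downward causation of order `k` iff
`Un⁽ᵏ⁾(f ; X_{t'}^α | X_t) > 0` for some `α` with `|α| = k`.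
-/
lemma prEq_congr (μ : Ω → ℝ) {A B : Type} (f : Ω → A) (g : Ω → B) (a : A) (b : B)
    (h : ∀ ω, f ω = a ↔ g ω = b) : prEq μ f a = prEq μ g b := by
  unfold prEq
  refine Finset.sum_congr rfl fun ω _ => ?_
  by_cases hc : f ω = a
  · rw [if_pos hc, if_pos ((h ω).mp hc)]
  · rw [if_neg hc, if_neg (fun hg => hc ((h ω).mpr hg))]

lemma prEq_zero (μ : Ω → ℝ) {A : Type} (f : Ω → A) (a : A)
    (h : ∀ ω, f ω ≠ a) : prEq μ f a = 0 := by
  unfold prEq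
  exact Finset.sum_eq_zero fun ω _ => by simp [h ω]

lemma prEq_comp (μ : Ω → ℝ) {A C D : Type} [Fintype C]
    (f : Ω → A) (h : Ω → C) (φ : C → D) (a : A) (d : D) :
    prEq μ (fun ω => (f ω, φ (h ω))) (a, d)
      = ∑ c, if φ c = d then prEq μ (fun ω => (f ω, h ω)) (a, c) else 0 := by
  have hpush : ∀ c : C, (if φ c = d then prEq μ (fun ω => (f ω, h ω)) (a, c) else 0)
      = ∑ ω, if φ c = d ∧ (f ω, h ω) = (a, c) then μ ω else 0 := by
    intro c
    unfold prEq
    split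
    · refine Finset.sum_congr rfl fun ω _ => ?_
      simp_all
    · refine (Finset.sum_eq_zero fun ω _ => ?_).symm
      simp_all
  have hsw : (∑ c, if φ c = d then prEq μ (fun ω => (f ω, h ω)) (a, c) else 0)
      = ∑ ω, ∑ c : C, if φ c = d ∧ (f ω, h ω) = (a, c) then μ ω else 0 :=
    (Finset.sum_congr rfl fun c _ => hpush c).trans Finset.sum_comm
  rw [hsw]
  unfold prEq
  beta_reduce
  refine Finset.sum_congr rfl fun ω _ => ?_
  rw [Finset.sum_eq_single (h ω) (fun c _ hc => by
      rw [if_neg]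
      rintro ⟨-, h2⟩
      exact hc (congrArg Prod.snd h2).symm) (by simp)]
  by_cases hf : f ω = a
  · simp [hf, Prod.ext_iff, and_comm]
  · simp [hf, Prod.ext_iff]

lemma markov_self (μ : Ω → ℝ) {B C : Type} (g : Ω → B) (h : Ω → C) :
    MarkovChain μ g g h := by
  intro a b c
  by_cases hab : a = b
  · subst hab
    rw [prEq_congr μ (fun ω => (g ω, g ω, h ω)) (fun ω => (g ω, h ω)) (a, a, c) (a, c)
        (fun ω => by simp [Prod.ext_iff, and_assoc]),
      prEq_congr μ (fun ω => (g ω, g ω)) g (a, a) a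
        (fun ω => by simp [Prod.ext_iff] <;> tauto)]
    ring
  · rw [prEq_zero μ (fun ω => (g ω, g ω, h ω)) (a, b, c)
        (fun ω hω => by simp [Prod.ext_iff] at hω; exact hab (hω.1 ▸ hω.2.1.symm ▸ rfl)),
      prEq_zero μ (fun ω => (g ω, g ω)) (a, b)
        (fun ω hω => by simp [Prod.ext_iff] at hω; exact hab (hω.1 ▸ hω.2.symm ▸ rfl)),
      zero_mul, zero_mul]

lemma markov_comp (μ : Ω → ℝ) {A B C D : Type} [Fintype C]
    (f : Ω → A) (g : Ω → B) (h : Ω → C) (φ : C → D)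
    (hM : MarkovChain μ f g h) : MarkovChain μ f g (fun ω => φ (h ω)) := by
  intro a b d
  have h1 : prEq μ (fun ω => (f ω, g ω, φ (h ω))) (a, b, d)
      = ∑ c, if φ c = d then prEq μ (fun ω => (f ω, g ω, h ω)) (a, b, c) else 0 := by
    rw [prEq_congr μ (fun ω => (f ω, g ω, φ (h ω))) (fun ω => ((f ω, g ω), φ (h ω)))
        (a, b, d) ((a, b), d) (fun ω => by simp [Prod.ext_iff, and_assoc]),
      prEq_comp μ (fun ω => (f ω, g ω)) h φ (a, b) d]
    refine Finset.sum_congr rfl fun c _ => if_congr Iff.rfl ?_ rfl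
    exact prEq_congr μ _ _ ((a, b), c) (a, b, c)
      (fun ω => by simp [Prod.ext_iff, and_assoc])
  have h2 : prEq μ (fun ω => (g ω, φ (h ω))) (b, d)
      = ∑ c, if φ c = d then prEq μ (fun ω => (g ω, h ω)) (b, c) else 0 :=
    prEq_comp μ g h φ b d
  rw [h1, h2, Finset.sum_mul, Finset.mul_sum]
  refine Finset.sum_congr rfl fun c _ => ?_
  by_cases hc : φ c = d
  · simp [hc, hM a b c]
  · simp [hc]

lemma markov_pair (μ : Ω → ℝ) {A B C : Type}
    (f : Ω → A) (g : Ω → B) (h : Ω → C)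
    (hM : MarkovChain μ f g h) : MarkovChain μ f g (fun ω => (g ω, h ω)) := by
  rintro a b ⟨c1, c2⟩
  by_cases hbc : b = c1
  · subst hbc
    rw [prEq_congr μ (fun ω => (f ω, g ω, g ω, h ω)) (fun ω => (f ω, g ω, h ω))
        (a, b, b, c2) (a, b, c2) (fun ω => by simp [Prod.ext_iff] <;> tauto),
      prEq_congr μ (fun ω => (g ω, g ω, h ω)) (fun ω => (g ω, h ω))
        (b, b, c2) (b, c2) (fun ω => by simp [Prod.ext_iff] <;> tauto)]
    exact hM a b c2
  · rw [prEq_zero μ (fun ω => (f ω, g ω, g ω, h ω)) (a, b, c1, c2)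
        (fun ω hω => by simp [Prod.ext_iff] at hω; exact hbc (hω.2.1 ▸ hω.2.2.1.symm ▸ rfl)),
      prEq_zero μ (fun ω => (g ω, g ω, h ω)) (b, c1, c2)
        (fun ω hω => by simp [Prod.ext_iff] at hω; exact hbc (hω.1 ▸ hω.2.1.symm ▸ rfl)),
      zero_mul, mul_zero]

theorem downward_causation_iff_D_pos
    {Ω : Type} [Fintype Ω] (μ : Ω → ℝ) (hμ : IsPMF μ)
    {n : ℕ} {𝓧 𝓨 : Fin n → Type} [∀ i, Fintype (𝓧 i)] [∀ i, Fintype (𝓨 i)]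
    (X : Ω → ∀ i, 𝓧 i) (X' : Ω → ∀ i, 𝓨 i)
    (k : ℕ)
    (Un : (V : Type) → (Ω → V) → (T : Type) → (Ω → T) → ℝ)
    (Syn : (T : Type) → (Ω → T) → ℝ)
    (D : ℝ)
    (hUn_nonneg : ∀ (V : Type) (f : Ω → V) (T : Type) (t : Ω → T), 0 ≤ Un V f T t)
    (hUn_dpi : ∀ (W Z T : Type) (f : Ω → W) (g : Ω → Z) (t : Ω → T),
      MarkovChain μ f g (fun ω => (X ω, t ω)) → Un W f T t ≤ Un Z g T t)
    (hself : ∀ (T : Type) (t : Ω → T), Un (∀ i, 𝓧 i) X T t = Syn T t)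
    (hD_ub : D ≤ ∑ α ∈ kSets n k, Syn (∀ i : α, 𝓨 i) (subvec X' α))
    (hD_lb : ∀ β ∈ kSets n k, Syn (∀ i : β, 𝓨 i) (subvec X' β) ≤ D) :
    (∃ (V : Type) (_ : Fintype V) (f : Ω → V),
        MarkovChain μ f X X' ∧
          ∃ α ∈ kSets n k, 0 < Un V f (∀ i : α, 𝓨 i) (subvec X' α)) ↔ 0 < D := by
  constructor
  · rintro ⟨V, _, f, hMC, α, hα, hUn⟩
    have hφ : MarkovChain μ f X (fun ω => subvec X' α ω) :=
      markov_comp μ f X X' (fun y => (fun i : α => y i)) hMC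
    have hpair : MarkovChain μ f X (fun ω => (X ω, subvec X' α ω)) :=
      markov_pair μ f X _ hφ
    have hle : Un V f (∀ i : α, 𝓨 i) (subvec X' α)
        ≤ Un (∀ i, 𝓧 i) X (∀ i : α, 𝓨 i) (subvec X' α) :=
      hUn_dpi V (∀ i, 𝓧 i) (∀ i : α, 𝓨 i) f X (subvec X' α) hpair
    have := hD_lb α hα
    rw [hself] at hle
    linarith
  · intro hD
    have hpos : 0 < ∑ α ∈ kSets n k, Syn (∀ i : α, 𝓨 i) (subvec X' α) := lt_of_lt_of_le hD hD_ub
    have : ∃ α ∈ kSets n k, 0 < Syn (∀ i : α, 𝓨 i) (subvec X' α) := by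
      by_contra hcon
      push_neg at hcon
      have : ∑ α ∈ kSets n k, Syn (∀ i : α, 𝓨 i) (subvec X' α) ≤ 0 :=
        Finset.sum_nonpos fun α hα => hcon α hα
      linarith
    obtain ⟨α, hα, hSyn⟩ := this
    refine ⟨∀ i, 𝓧 i, inferInstance, X, markov_self μ X X', α, hα, ?_⟩
    rw [hself]
    exact hSyn
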